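/- For the all-ones n×n matrix C (complete graph with self-loops), the 2n×2n symplectic evolution matrix M = [[I, C],[C, I+C²]] has exactly one eigenvalue greater than 1, namely λ = (2+n²)/2 + (n/2)√(n²+4), and the eigenvalue 1 has multiplicity 2n−2. -/

import Mathlib

open Matrix Polynomial

lemma det_smul_one_add_smul_allOnes {K : Type*} [Field K] {n : ℕ} (hn : 1 ≤ n)
    (a b : K) (ha : a ≠ 0) :
    (a • (1 : Matrix (Fin n) (Fin n) K) + b • (Matrix.of fun _ _ => (1:K))).det
      = a ^ (n - 1) * (a + n * b) := by
  have key : a • (1 : Matrix (Fin n) (Fin n) K) + b • (Matrix.of fun _ _ => (1:K))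
      = a • (1 + Matrix.replicateCol Unit (fun _ => b / a) * Matrix.replicateRow Unit (fun _ => (1:K))) := by
    ext i j
    by_cases h : i = j <;>
      simp [h, Matrix.mul_apply, Matrix.one_apply, Matrix.replicateCol_apply,
        Matrix.replicateRow_apply] <;> field_simp
  rw [key, Matrix.det_smul, Matrix.det_one_add_replicateCol_mul_replicateRow]
  have hd : (fun _ : Fin n => (1:K)) ⬝ᵥ (fun _ => b / a) = n * (b / a) := by
    simp [dotProduct, mul_comm]
  rw [hd]
  have hn' : a ^ n = a ^ (n-1) * a := by
    conv_lhs => rw [← Nat.succ_pred_eq_of_pos hn, pow_succ, Nat.pred_eq_sub_one]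
  simp only [Fintype.card_fin]
  rw [hn']
  field_simp

lemma comb_mul {K : Type*} [Field K] {n : ℕ} (p q r s : K) :
    (p • (1 : Matrix (Fin n) (Fin n) K)
        + q • ((Matrix.of fun _ _ => (1:K)) : Matrix (Fin n) (Fin n) K))
      * (r • (1 : Matrix (Fin n) (Fin n) K)
        + s • ((Matrix.of fun _ _ => (1:K)) : Matrix (Fin n) (Fin n) K))
    = (p*r) • (1 : Matrix (Fin n) (Fin n) K)
        + (p*s + q*r + (n:K)*q*s)
          • ((Matrix.of fun _ _ => (1:K)) : Matrix (Fin n) (Fin n) K) := by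
  have hJ2 : ((Matrix.of fun _ _ => (1:K)) : Matrix (Fin n) (Fin n) K)
        * ((Matrix.of fun _ _ => (1:K)) : Matrix (Fin n) (Fin n) K)
      = (n:K) • ((Matrix.of fun _ _ => (1:K)) : Matrix (Fin n) (Fin n) K) := by
    ext i j; simp [Matrix.mul_apply]
  simp only [Matrix.mul_add, Matrix.add_mul, smul_mul_assoc, mul_smul_comm, smul_smul,
    Matrix.one_mul, Matrix.mul_one, hJ2]
  module

lemma det_block {K : Type*} [Field K] {n : ℕ} (hn : 1 ≤ n) (a : K)
    (ha : a ≠ 0) (hb : a - (n:K)^2 ≠ 0) :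
    (Matrix.fromBlocks (a • (1 : Matrix (Fin n) (Fin n) K))
        ((-1:K) • (Matrix.of fun _ _ => (1:K))) ((-1:K) • (Matrix.of fun _ _ => (1:K)))
        (a • (1 : Matrix (Fin n) (Fin n) K) + (-(n:K)) • (Matrix.of fun _ _ => (1:K)))).det
      = a ^ (2*n-2) * (a^2 - (n:K)^2 * a - (n:K)^2) := by
  set J : Matrix (Fin n) (Fin n) K := Matrix.of fun _ _ => (1:K) with hJdef
  set D : Matrix (Fin n) (Fin n) K := a • 1 + (-(n:K)) • J with hD
  set E : Matrix (Fin n) (Fin n) K := a⁻¹ • 1 + ((n:K)/(a*(a-(n:K)^2))) • J with hE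
  have hED : E * D = 1 := by
    rw [hE, hD, hJdef, comb_mul, inv_mul_cancel₀ ha]
    have hc : a⁻¹ * (-(n:K)) + (n:K)/(a*(a-(n:K)^2)) * a
        + (n:K) * ((n:K)/(a*(a-(n:K)^2))) * (-(n:K)) = 0 := by
      field_simp
      ring
    rw [hc]
    simp
  have hDE : D * E = 1 := by
    rw [hE, hD, hJdef, comb_mul, mul_inv_cancel₀ ha]
    have hc : a * ((n:K)/(a*(a-(n:K)^2))) + (-(n:K)) * a⁻¹
        + (n:K) * (-(n:K)) * ((n:K)/(a*(a-(n:K)^2))) = 0 := by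
      field_simp
      ring
    rw [hc]
    simp
  letI : Invertible D := ⟨E, hED, hDE⟩
  rw [Matrix.det_fromBlocks₂₂]
  have hinv : (⅟D : Matrix (Fin n) (Fin n) K) = E := rfl
  rw [hinv]
  have hBEC : ((-1:K) • J) * E * ((-1:K) • J)
      = (0:K) • (1 : Matrix (Fin n) (Fin n) K) + ((n:K)/(a - (n:K)^2)) • J := by
    have e1 : ((-1:K) • J) = (0:K) • (1 : Matrix (Fin n) (Fin n) K) + (-1:K) • J := by
      simp
    rw [e1, hE, hJdef, comb_mul, comb_mul]
    congr 1
    · simp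
    · congr 1
      field_simp
      ring
  rw [hBEC]
  have hsub : a • (1 : Matrix (Fin n) (Fin n) K)
      - ((0:K) • (1 : Matrix (Fin n) (Fin n) K) + ((n:K)/(a - (n:K)^2)) • J)
      = a • 1 + (-((n:K)/(a - (n:K)^2))) • J := by
    simp [sub_eq_add_neg, add_comm]
  rw [hsub, hD, hJdef]
  rw [det_smul_one_add_smul_allOnes hn _ _ ha, det_smul_one_add_smul_allOnes hn _ _ ha]
  have hpow : a ^ (n-1) * (a + (n:K) * (-(n:K)))
        * (a ^ (n-1) * (a + (n:K) * (-((n:K)/(a - (n:K)^2)))))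
      = a ^ ((n-1)+(n-1))
        * ((a + (n:K) * (-(n:K))) * (a + (n:K) * (-((n:K)/(a - (n:K)^2))))) := by
    rw [pow_add]; ring
  rw [hpow, show (n-1)+(n-1) = 2*n-2 by omega]
  congr 1
  field_simp
  ring

set_option synthInstance.maxHeartbeats 1000000 in
set_option maxHeartbeats 1000000 in
lemma charpoly_key {n : ℕ} (hn : 1 ≤ n)
    (C : Matrix (Fin n) (Fin n) ℝ) (hC : ∀ i j, C i j = 1) :
    (Matrix.fromBlocks 1 C C (1 + C * C)).charpoly
      = (X - 1) ^ (2 * n - 2) * (X ^ 2 - Polynomial.C (2 + (n : ℝ) ^ 2) * X + 1) := by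
  classical
  set φ : Polynomial ℝ →+* RatFunc ℝ := (algebraMap (Polynomial ℝ) (RatFunc ℝ)) with hφdef
  have hφ : Function.Injective φ := IsFractionRing.injective _ _
  apply hφ
  have ha : φ X - 1 ≠ 0 := by
    intro h
    refine Polynomial.X_sub_C_ne_zero (1:ℝ) (hφ ?_)
    rw [map_sub, map_zero, Polynomial.C_1, _root_.map_one]
    exact h
  have hcast : Polynomial.C (1 + (n:ℝ)^2) = 1 + (n : Polynomial ℝ)^2 := by
    rw [map_add, map_pow, map_natCast, _root_.map_one]
  have hb : φ X - 1 - (n : RatFunc ℝ)^2 ≠ 0 := by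
    intro h
    refine Polynomial.X_sub_C_ne_zero (1 + (n:ℝ)^2) (hφ ?_)
    rw [map_sub, map_zero, hcast, map_add, map_pow, map_natCast, _root_.map_one]
    linear_combination h
  rw [Matrix.charpoly, RingHom.map_det, RingHom.mapMatrix_apply, charmatrix_fromBlocks,
    Matrix.fromBlocks_map]
  have h1 : (charmatrix (1 : Matrix (Fin n) (Fin n) ℝ)).map φ
      = (φ X - 1) • (1 : Matrix (Fin n) (Fin n) (RatFunc ℝ)) := by
    ext i j
    by_cases h : i = j <;>
      simp [h, charmatrix_apply_eq, charmatrix_apply_ne, Matrix.one_apply,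
        Matrix.smul_apply, map_sub, _root_.map_one]
  have h2 : ((-(C.map Polynomial.C)).map φ)
      = (-1 : RatFunc ℝ) • ((Matrix.of fun _ _ => (1 : RatFunc ℝ))
          : Matrix (Fin n) (Fin n) (RatFunc ℝ)) := by
    ext i j
    simp [hC]
  have h3 : (charmatrix (1 + C * C)).map φ
      = (φ X - 1) • (1 : Matrix (Fin n) (Fin n) (RatFunc ℝ))
        + (-(n : RatFunc ℝ)) • ((Matrix.of fun _ _ => (1 : RatFunc ℝ))
            : Matrix (Fin n) (Fin n) (RatFunc ℝ)) := by
    have hcc : ∀ i j, (C * C) i j = (n:ℝ) := by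
      intro i j; simp [Matrix.mul_apply, hC]
    ext i j
    by_cases h : i = j <;>
      simp [h, charmatrix_apply_eq, charmatrix_apply_ne, Matrix.one_apply,
        Matrix.add_apply, Matrix.smul_apply, hcc, map_sub, map_add, _root_.map_one,
        map_natCast] <;> ring
  rw [h1, h2, h3, det_block hn _ ha hb]
  have hc2 : φ (Polynomial.C (2 + (n:ℝ)^2)) = 2 + (n : RatFunc ℝ)^2 := by
    rw [show Polynomial.C (2 + (n:ℝ)^2) = 2 + (n : Polynomial ℝ)^2 by
      rw [map_add, map_pow, map_natCast, map_ofNat]]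
    rw [map_add, map_pow, map_natCast, map_ofNat]
  rw [_root_.map_mul, map_pow, map_sub, _root_.map_one, map_add, map_sub, _root_.map_mul,
    map_pow, hc2, _root_.map_one]
  ring

theorem all_ones_evolution_spectrum {n : ℕ} (hn : 1 ≤ n)
    (C : Matrix (Fin n) (Fin n) ℝ) (hC : ∀ i j, C i j = 1)
    (M : Matrix (Fin n ⊕ Fin n) (Fin n ⊕ Fin n) ℝ)
    (hM : M = Matrix.fromBlocks 1 C C (1 + C * C)) :
    let lam0 : ℝ := (2 + (n : ℝ) ^ 2) / 2 + ((n : ℝ) / 2) * Real.sqrt ((n : ℝ) ^ 2 + 4)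
    M.charpoly = (X - 1) ^ (2 * n - 2)
        * (X ^ 2 - Polynomial.C (2 + (n : ℝ) ^ 2) * X + 1) ∧
    M.charpoly.IsRoot lam0 ∧
    lam0 > 1 ∧
    (∀ mu : ℝ, mu > 1 → M.charpoly.IsRoot mu → mu = lam0) := by
  intro lam0
  have key : M.charpoly = (X - 1) ^ (2 * n - 2)
      * (X ^ 2 - Polynomial.C (2 + (n : ℝ) ^ 2) * X + 1) := by
    rw [hM]; exact charpoly_key hn C hC
  have hl : lam0 = (2 + (n : ℝ) ^ 2) / 2 + ((n : ℝ) / 2) * Real.sqrt ((n : ℝ) ^ 2 + 4) := rfl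
  have hsq : Real.sqrt ((n:ℝ)^2 + 4) ^ 2 = (n:ℝ)^2 + 4 := Real.sq_sqrt (by positivity)
  have hquad : lam0 ^ 2 - (2 + (n:ℝ)^2) * lam0 + 1 = 0 := by
    rw [hl]
    linear_combination ((n:ℝ)^2/4) * hsq
  have h1n : (1:ℝ) ≤ (n:ℝ) := by exact_mod_cast hn
  have hsnn : 0 ≤ Real.sqrt ((n:ℝ)^2 + 4) := Real.sqrt_nonneg _
  have hlam1 : lam0 > 1 := by
    rw [hl]
    nlinarith
  refine ⟨key, ?_, hlam1, ?_⟩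
  · rw [key]
    simp only [Polynomial.IsRoot, Polynomial.eval_mul, Polynomial.eval_pow,
      Polynomial.eval_add, Polynomial.eval_sub, Polynomial.eval_one, Polynomial.eval_X,
      Polynomial.eval_C]
    rw [hquad, mul_zero]
  · intro mu hmu hroot
    rw [key] at hroot
    simp only [Polynomial.IsRoot, Polynomial.eval_mul, Polynomial.eval_pow,
      Polynomial.eval_add, Polynomial.eval_sub, Polynomial.eval_one, Polynomial.eval_X,
      Polynomial.eval_C] at hroot
    have hpw : (mu - 1) ^ (2*n-2) ≠ 0 := pow_ne_zero _ (sub_ne_zero.mpr (ne_of_gt hmu))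
    have hq : mu ^ 2 - (2 + (n:ℝ)^2) * mu + 1 = 0 := by
      rcases mul_eq_zero.mp hroot with h | h
      · exact absurd h hpw
      · exact h
    have hfac : (mu - lam0) * (mu * lam0 - 1) = 0 := by
      linear_combination lam0 * hq - mu * hquad
    rcases mul_eq_zero.mp hfac with h | h
    · linarith
    · exfalso; nlinarith
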